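/- Let T be a compact metric space, g : T → T a continuous surjective map, and Ω ⊆ T a nonempty compact set with g(Ω) = Ω and with no isolated points, such that there exists x₀ ∈ Ω whose forward orbit {g^n(x₀) : n ≥ 0} is dense in Ω. Then for every t̄ = (t_0, t_1, …) ∈ Π_g with t_i ∈ Ω for all i ≥ 0, there exists x̄ = (x_0, x_1, …) ∈ Π_g with x_i ∈ Ω for all i ≥ 0 such that t̄ belongs to the ω-limit set of x̄ under the shift map ĝ, i.e., there is a strictly increasing sequence of natural numbers n_k with ĝ^{n_k}(x̄) → t̄ in Π_g. -/

import Mathlib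

/-- The inverse limit Π_g of a map g : T → T. -/
abbrev InvLim {T : Type*} (g : T → T) : Type _ :=
  {t : ℕ → T // ∀ i : ℕ, g (t (i + 1)) = t i}

/-- The shift map ĝ : Π_g → Π_g, ĝ(t_0, t_1, …) = (g(t_0), t_0, t_1, …). -/
def shiftMap {T : Type*} (g : T → T) (t : InvLim g) : InvLim g :=
  ⟨fun i => Nat.casesOn i (g (t.1 0)) fun j => t.1 j, by
    intro i
    cases i with
    | zero => rfl
    | succ j => exact t.2 j⟩

lemma shift_apply {T : Type*} (g : T → T) (t : InvLim g) (i : ℕ) :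
    (shiftMap g t).1 i = g (t.1 i) := by
  cases i with
  | zero => rfl
  | succ j => exact (t.2 j).symm

lemma shift_iterate_apply {T : Type*} (g : T → T) (t : InvLim g) (n i : ℕ) :
    ((shiftMap g)^[n] t).1 i = g^[n] (t.1 i) := by
  induction n with
  | zero => rfl
  | succ n ih =>
      rw [Function.iterate_succ_apply', Function.iterate_succ_apply', shift_apply, ih]

/-- if Ω is a nonempty compact g-invariant set without isolated points
carrying a dense forward orbit, then every t̄ ∈ Π_g with entries in Ω lies in the
ω-limit set (under the shift ĝ) of some x̄ ∈ Π_g with entries in Ω. -/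
theorem stmt9 {T : Type*} [MetricSpace T] [CompactSpace T]
    (g : T → T) (hgc : Continuous g) (hgs : Function.Surjective g)
    (Ω : Set T) (hne : Ω.Nonempty) (hcomp : IsCompact Ω) (hinv : g '' Ω = Ω)
    (hacc : ∀ x ∈ Ω, AccPt x (Filter.principal Ω))
    (x₀ : T) (hx₀ : x₀ ∈ Ω)
    (hdense : Ω ⊆ closure (Set.range fun n : ℕ => g^[n] x₀))
    (tbar : InvLim g) (ht : ∀ i : ℕ, tbar.1 i ∈ Ω) :
    ∃ xbar : InvLim g, (∀ i : ℕ, xbar.1 i ∈ Ω) ∧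
      ∃ n : ℕ → ℕ, StrictMono n ∧
        Filter.Tendsto (fun k : ℕ => (shiftMap g)^[n k] xbar) Filter.atTop (nhds tbar) := by
  classical
  -- the orbit of x₀ returns near any point of Ω at arbitrarily large times
  have hreturn : ∀ z ∈ Ω, ∀ ε : ℝ, 0 < ε → ∀ N : ℕ, ∃ n, N ≤ n ∧ dist (g^[n] x₀) z < ε := by
    intro z hz ε hε N
    set F : Set T := (fun i => g^[i] x₀) '' (Set.Iio N) with hF
    have hFfin : F.Finite := (Set.finite_Iio N).image _
    have hU : Metric.ball z ε \ (F \ {z}) ∈ nhds z := by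
      refine Filter.inter_mem (Metric.ball_mem_nhds z hε) ?_
      refine ((Set.Finite.diff hFfin : (F \ {z}).Finite).isClosed.isOpen_compl).mem_nhds ?_
      simp
    obtain ⟨w, hwU, hwz⟩ := (accPt_iff_nhds.1 (hacc z hz) _ hU)
    obtain ⟨⟨hwball, hwF'⟩, hwΩ⟩ := hwU
    have hwF : w ∉ F := fun hwF => hwF' ⟨hwF, hwz⟩
    obtain ⟨δ₁, hδ₁, hball⟩ := Metric.isOpen_iff.1 hFfin.isClosed.isOpen_compl w hwF
    have hdz : dist w z < ε := Metric.mem_ball.1 hwball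
    set δ := min δ₁ (ε - dist w z) with hδdef
    have hδpos : 0 < δ := lt_min hδ₁ (by linarith)
    obtain ⟨b, hbmem, hbd⟩ := Metric.mem_closure_iff.1 (hdense hwΩ) δ hδpos
    obtain ⟨n, rfl⟩ := hbmem
    refine ⟨n, ?_, ?_⟩
    · by_contra h
      push_neg at h
      have : g^[n] x₀ ∈ F := ⟨n, h, rfl⟩
      have : g^[n] x₀ ∈ Metric.ball w δ₁ := by
        rw [Metric.mem_ball, dist_comm]
        exact lt_of_lt_of_le hbd (min_le_left _ _)
      exact hball this ‹g^[n] x₀ ∈ F›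
    · calc dist (g^[n] x₀) z ≤ dist (g^[n] x₀) w + dist w z := dist_triangle _ _ _
        _ = dist w (g^[n] x₀) + dist w z := by rw [dist_comm]
        _ < (ε - dist w z) + dist w z := by
            have := lt_of_lt_of_le hbd (min_le_right δ₁ (ε - dist w z))
            linarith
        _ = ε := by ring
  -- uniform-in-finitely-many-iterates continuity
  have hdelta : ∀ (m : ℕ) (y : T) (ε : ℝ), 0 < ε →
      ∃ δ > 0, ∀ z, dist z y < δ → ∀ j ≤ m, dist (g^[j] z) (g^[j] y) < ε := by
    intro m
    induction m with
    | zero =>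
        intro y ε hε
        refine ⟨ε, hε, fun z hz j hj => ?_⟩
        interval_cases j
        simpa using hz
    | succ m ih =>
        intro y ε hε
        obtain ⟨δ', hδ', h'⟩ := ih y ε hε
        have hc : ContinuousAt (g^[m+1]) y := (hgc.iterate (m+1)).continuousAt
        obtain ⟨δ'', hδ'', h''⟩ := Metric.continuousAt_iff.1 hc ε hε
        refine ⟨min δ' δ'', lt_min hδ' hδ'', fun z hz j hj => ?_⟩
        rcases Nat.lt_succ_iff_lt_or_eq.1 (Nat.lt_succ_of_le hj) with hj' | rfl
        · exact h' z (lt_of_lt_of_le hz (min_le_left _ _)) j (Nat.lt_succ_iff.1 hj')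
        · exact h'' (lt_of_lt_of_le hz (min_le_right _ _))
  -- choose δ k for each k
  choose δ hδpos hδ using fun k : ℕ =>
    hdelta k (tbar.1 k) (1 / ((k : ℝ) + 1)) (by positivity)
  have hrec : ∀ (N k : ℕ), ∃ n, N ≤ n ∧ dist (g^[n] x₀) (tbar.1 k) < δ k :=
    fun N k => hreturn _ (ht k) _ (hδpos k) N
  -- recursively choose times a k
  let a : ℕ → ℕ := fun k =>
    Nat.rec (Classical.choose (hrec 0 0))
      (fun k ak => Classical.choose (hrec (ak + 1) (k + 1))) k
  have ha : ∀ k, dist (g^[a k] x₀) (tbar.1 k) < δ k := by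
    intro k
    cases k with
    | zero => exact (Classical.choose_spec (hrec 0 0)).2
    | succ k => exact (Classical.choose_spec (hrec (a k + 1) (k + 1))).2
  have hamono : ∀ k, a k + 1 ≤ a (k + 1) := by
    intro k
    exact (Classical.choose_spec (hrec (a k + 1) (k + 1))).1
  -- a backward orbit of x₀ inside Ω
  have hpre : ∀ y : {z // z ∈ Ω}, ∃ w : {z // z ∈ Ω}, g w.1 = y.1 := by
    rintro ⟨y, hy⟩
    rw [← hinv] at hy
    obtain ⟨w, hw, hgw⟩ := hy
    exact ⟨⟨w, hw⟩, hgw⟩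
  choose pre hpre' using hpre
  set p0 : {z // z ∈ Ω} := ⟨x₀, hx₀⟩ with hp0
  set b : ℕ → T := fun j => (pre^[j] p0).1 with hbdef
  have hbstep : ∀ j, g (b (j + 1)) = b j := by
    intro j
    show g (pre^[j+1] p0).1 = (pre^[j] p0).1
    rw [Function.iterate_succ_apply']
    exact hpre' _
  have hbmem : ∀ j, b j ∈ Ω := fun j => (pre^[j] p0).2
  have hbg : ∀ i, g^[i] (b i) = x₀ := by
    intro i
    induction i with
    | zero => rfl
    | succ i ih =>
        rw [Function.iterate_succ_apply, hbstep i]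
        exact ih
  -- t-coherence under iterates
  have htiter : ∀ (j i : ℕ), g^[j] (tbar.1 (i + j)) = tbar.1 i := by
    intro j
    induction j with
    | zero => intro i; rfl
    | succ j ih =>
        intro i
        rw [Function.iterate_succ_apply, show i + (j + 1) = (i + j) + 1 by omega,
          tbar.2 (i + j)]
        exact ih i
  refine ⟨⟨b, hbstep⟩, hbmem, fun k => a k + k, ?_, ?_⟩
  · apply strictMono_nat_of_lt_succ
    intro k
    have := hamono k
    omega
  · -- key estimate
    have key : ∀ k i, i ≤ k →
        dist (g^[a k + k] (b i)) (tbar.1 i) < 1 / ((k : ℝ) + 1) := by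
      intro k i hik
      have e1 : g^[a k + k] (b i) = g^[k - i] (g^[a k] x₀) := by
        have : a k + k = ((k - i) + a k) + i := by omega
        rw [this, Function.iterate_add_apply, Function.iterate_add_apply, hbg i]
      have e2 : g^[k - i] (tbar.1 k) = tbar.1 i := by
        have h2 := htiter (k - i) i
        rwa [show i + (k - i) = k by omega] at h2
      rw [e1, ← e2]
      exact hδ k _ (ha k) (k - i) (by omega)
    rw [tendsto_subtype_rng]
    rw [tendsto_pi_nhds]
    intro i
    have heq : ∀ k, (((shiftMap g)^[a k + k] (⟨b, hbstep⟩ : InvLim g)).1) i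
        = g^[a k + k] (b i) := fun k => shift_iterate_apply g _ _ i
    simp only [heq]
    rw [tendsto_iff_dist_tendsto_zero]
    apply squeeze_zero' (Filter.Eventually.of_forall fun k => dist_nonneg) ?_
      tendsto_one_div_add_atTop_nhds_zero_nat
    filter_upwards [Filter.eventually_ge_atTop i] with k hk
    exact le_of_lt (key k i hk)
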